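/- Let A be a nonsingular n×n real matrix and H an n×n real matrix, and let 1 ≤ k ≤ n. Suppose the k×n block A_{k,n} of the first k rows of A has compact SVD A_{k,n} = S Σ T^T with Σ invertible k×k diagonal. Then (AH)_{k,k} = S Σ (T^T H_{n,k}) where H_{n,k} is the n×k block of the first k columns of H, and if G := T^T H_{n,k} is invertible, then the spectral norm of ((AH)_{k,k})^{-1} satisfies ||((AH)_{k,k})^{-1}|| ≤ ||G^{-1}|| · ||A_{k,n}^+|| ≤ ||G^{-1}|| · ||A^{-1}||. -/

import Mathlib

open Matrix

/-- The `k×k` leading principal submatrix of an `n×n` matrix. -/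
def lead {F : Type*} {n : ℕ} (A : Matrix (Fin n) (Fin n) F) (k : ℕ) (hk : k ≤ n) :
    Matrix (Fin k) (Fin k) F :=
  A.submatrix (Fin.castLE hk) (Fin.castLE hk)

/-- The spectral norm (largest singular value) of a real matrix. -/
noncomputable def specNorm {m n : Type*} [Fintype m] [Fintype n] [DecidableEq n]
    (W : Matrix m n ℝ) : ℝ :=
  ‖LinearMap.toContinuousLinearMap (Matrix.toEuclideanLin W)‖

section aux
open scoped Matrix.Norms.L2Operator

lemma specNorm_eq {m n : Type*} [Fintype m] [Fintype n] [DecidableEq n]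
    (W : Matrix m n ℝ) : specNorm W = ‖W‖ := rfl

lemma norm_one_of_orth {m k : ℕ} (hk : 1 ≤ k) (M : Matrix (Fin m) (Fin k) ℝ)
    (h : Mᵀ * M = 1) : ‖M‖ = 1 := by
  haveI : Nonempty (Fin k) := ⟨⟨0, hk⟩⟩
  have h2 := Matrix.l2_opNorm_conjTranspose_mul_self M
  rw [conjTranspose_eq_transpose_of_trivial, h] at h2
  have h1 : ‖(1 : Matrix (Fin k) (Fin k) ℝ)‖ = 1 := by
    rw [Matrix.cstar_norm_def, _root_.map_one]
    exact ContinuousLinearMap.norm_id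
  rw [h1] at h2
  rcases mul_self_eq_one_iff.mp h2.symm with h | h
  · exact h
  · nlinarith [norm_nonneg M]

lemma l2_norm_transpose {m k : ℕ} (M : Matrix (Fin m) (Fin k) ℝ) : ‖Mᵀ‖ = ‖M‖ := by
  rw [← conjTranspose_eq_transpose_of_trivial]
  exact Matrix.l2_opNorm_conjTranspose M

end aux

/-- Let `A` be a nonsingular `n×n` real matrix, `H` an `n×n` real matrix, `1 ≤ k ≤ n`.
Suppose the block `A_{k,n}` of the first `k` rows of `A` has compact SVD
`A_{k,n} = S Σ Tᵀ` with `Σ` an invertible `k×k` diagonal matrix.  Then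
`(AH)_{k,k} = S Σ (Tᵀ H_{n,k})`, and if `G := Tᵀ H_{n,k}` is invertible, then
`‖((AH)_{k,k})⁻¹‖ ≤ ‖G⁻¹‖ · ‖A_{k,n}⁺‖ ≤ ‖G⁻¹‖ · ‖A⁻¹‖`, where
`A_{k,n}⁺ = T Σ⁻¹ Sᵀ` is the Moore–Penrose pseudoinverse and `‖·‖` the spectral norm. -/
theorem genp_one_sided_multiplier_norm_bound {n k : ℕ} (hk1 : 1 ≤ k) (hk : k ≤ n)
    (A H : Matrix (Fin n) (Fin n) ℝ) (hA : IsUnit A.det)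
    (S : Matrix (Fin k) (Fin k) ℝ) (T : Matrix (Fin n) (Fin k) ℝ) (σ : Fin k → ℝ)
    (hσ : ∀ i, σ i ≠ 0) (hS : Sᵀ * S = 1) (hT : Tᵀ * T = 1)
    (hSVD : A.submatrix (Fin.castLE hk) id = S * Matrix.diagonal σ * Tᵀ) :
    lead (A * H) k hk =
      S * Matrix.diagonal σ * (Tᵀ * H.submatrix id (Fin.castLE hk)) ∧
    (IsUnit (Tᵀ * H.submatrix id (Fin.castLE hk)).det →
      specNorm (lead (A * H) k hk)⁻¹ ≤
          specNorm (Tᵀ * H.submatrix id (Fin.castLE hk))⁻¹ *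
            specNorm (T * Matrix.diagonal (fun i => (σ i)⁻¹) * Sᵀ) ∧
        specNorm (Tᵀ * H.submatrix id (Fin.castLE hk))⁻¹ *
            specNorm (T * Matrix.diagonal (fun i => (σ i)⁻¹) * Sᵀ) ≤
          specNorm (Tᵀ * H.submatrix id (Fin.castLE hk))⁻¹ * specNorm A⁻¹) := by
  open scoped Matrix.Norms.L2Operator in
  set G : Matrix (Fin k) (Fin k) ℝ := Tᵀ * H.submatrix id (Fin.castLE hk) with hG
  have hlead : lead (A * H) k hk = S * Matrix.diagonal σ * G := by
    rw [lead, Matrix.submatrix_mul _ _ _ id _ Function.bijective_id, hSVD, hG, Matrix.mul_assoc]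
  refine ⟨hlead, fun hGu => ?_⟩
  have hDu : IsUnit (Matrix.diagonal σ).det := by
    rw [Matrix.det_diagonal]
    exact isUnit_iff_ne_zero.mpr (Finset.prod_ne_zero_iff.mpr fun i _ => hσ i)
  have hDinv : (Matrix.diagonal σ)⁻¹ = Matrix.diagonal (fun i => (σ i)⁻¹) := by
    refine Matrix.inv_eq_left_inv ?_
    rw [Matrix.diagonal_mul_diagonal, ← Matrix.diagonal_one,
      show (fun i => (σ i)⁻¹ * σ i) = fun _ : Fin k => (1 : ℝ) from
        funext fun i => inv_mul_cancel₀ (hσ i)]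
  have hSinv : S⁻¹ = Sᵀ := Matrix.inv_eq_left_inv hS
  -- P : the k×n "first rows" selector
  set P : Matrix (Fin k) (Fin n) ℝ := (1 : Matrix (Fin n) (Fin n) ℝ).submatrix (Fin.castLE hk) id
    with hP
  have hPPt : P * Pᵀ = 1 := by
    have h := Matrix.submatrix_mul (1 : Matrix (Fin n) (Fin n) ℝ) 1 (Fin.castLE hk) id
      (Fin.castLE hk) Function.bijective_id
    rw [Matrix.one_mul, Matrix.submatrix_one _ (Fin.castLE_injective hk)] at h
    rw [hP, Matrix.transpose_submatrix, Matrix.transpose_one]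
    exact h.symm
  have hPA : P * A = S * Matrix.diagonal σ * Tᵀ := by
    have h := Matrix.submatrix_mul (1 : Matrix (Fin n) (Fin n) ℝ) A (Fin.castLE hk) id
      id Function.bijective_id
    rw [Matrix.one_mul, Matrix.submatrix_id_id] at h
    rw [hP, ← h, hSVD]
  -- pseudoinverse identity : T * Σ⁻¹ * Sᵀ = (T * Tᵀ) * (A⁻¹ * Pᵀ)
  have h1 : S * Matrix.diagonal σ * Tᵀ * A⁻¹ = P := by
    rw [← hPA, Matrix.mul_assoc, Matrix.mul_nonsing_inv A hA, Matrix.mul_one]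
  have h2 : Tᵀ * A⁻¹ = (Matrix.diagonal σ)⁻¹ * Sᵀ * P := by
    have := congrArg (fun M => (Matrix.diagonal σ)⁻¹ * Sᵀ * M) h1
    rw [← this]
    rw [show S * Matrix.diagonal σ * Tᵀ * A⁻¹ = S * (Matrix.diagonal σ * (Tᵀ * A⁻¹)) by
      simp [Matrix.mul_assoc]]
    rw [Matrix.mul_assoc ((Matrix.diagonal σ)⁻¹) Sᵀ, ← Matrix.mul_assoc Sᵀ, hS, Matrix.one_mul,
      ← Matrix.mul_assoc, Matrix.nonsing_inv_mul _ hDu, Matrix.one_mul]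
  have h3 : (Matrix.diagonal σ)⁻¹ * Sᵀ = Tᵀ * A⁻¹ * Pᵀ := by
    rw [h2, Matrix.mul_assoc, hPPt, Matrix.mul_one]
  have hpseudo : T * Matrix.diagonal (fun i => (σ i)⁻¹) * Sᵀ = (T * Tᵀ) * (A⁻¹ * Pᵀ) := by
    rw [← hDinv, Matrix.mul_assoc T, h3]
    simp [Matrix.mul_assoc]
  -- inverse of the leading block
  have hleadinv : (lead (A * H) k hk)⁻¹ = G⁻¹ * ((Matrix.diagonal σ)⁻¹ * Sᵀ) := by
    rw [hlead, Matrix.mul_inv_rev, Matrix.mul_inv_rev, hSinv]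
  have hGinvTt : (lead (A * H) k hk)⁻¹ =
      G⁻¹ * (Tᵀ * (T * Matrix.diagonal (fun i => (σ i)⁻¹) * Sᵀ)) := by
    rw [hleadinv, hDinv]
    congr 1
    rw [Matrix.mul_assoc T, ← Matrix.mul_assoc Tᵀ, hT, Matrix.one_mul]
  have hnT : ‖T‖ = 1 := norm_one_of_orth hk1 T hT
  have hnTt : ‖Tᵀ‖ = 1 := by rw [l2_norm_transpose, hnT]
  have hnPt : ‖Pᵀ‖ = 1 := by
    refine norm_one_of_orth hk1 Pᵀ ?_
    rw [Matrix.transpose_transpose, hPPt]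
  simp only [specNorm_eq]
  constructor
  · rw [hGinvTt]
    calc ‖G⁻¹ * (Tᵀ * (T * Matrix.diagonal (fun i => (σ i)⁻¹) * Sᵀ))‖
        ≤ ‖G⁻¹‖ * ‖Tᵀ * (T * Matrix.diagonal (fun i => (σ i)⁻¹) * Sᵀ)‖ :=
          Matrix.l2_opNorm_mul _ _
      _ ≤ ‖G⁻¹‖ * (‖Tᵀ‖ * ‖T * Matrix.diagonal (fun i => (σ i)⁻¹) * Sᵀ‖) := by
          exact mul_le_mul_of_nonneg_left (Matrix.l2_opNorm_mul _ _) (norm_nonneg _)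
      _ = ‖G⁻¹‖ * ‖T * Matrix.diagonal (fun i => (σ i)⁻¹) * Sᵀ‖ := by rw [hnTt, one_mul]
  · refine mul_le_mul_of_nonneg_left ?_ (norm_nonneg _)
    rw [hpseudo]
    calc ‖(T * Tᵀ) * (A⁻¹ * Pᵀ)‖
        ≤ ‖T * Tᵀ‖ * ‖A⁻¹ * Pᵀ‖ := Matrix.l2_opNorm_mul _ _
      _ ≤ (‖T‖ * ‖Tᵀ‖) * (‖A⁻¹‖ * ‖Pᵀ‖) := by
          refine mul_le_mul (Matrix.l2_opNorm_mul _ _) (Matrix.l2_opNorm_mul _ _)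
            (norm_nonneg _) ?_
          positivity
      _ = ‖A⁻¹‖ := by rw [hnT, hnTt, hnPt]; ring
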